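/- Let d ≥ 2, r > 0, and h : (0, r] → ℝ≥0 increasing. If ∫₀^r k_{d-2}(t) dh(t) converges, then ∫₀^r (h(t) − h(0))/t^{d-1} dt < ∞, where h(0) := lim_{t→0⁺} h(t). -/

import Mathlib

open MeasureTheory Set Filter
open intervalIntegral
open scoped ENNReal

/-- The kernel `k_{d-2}`: `log t` when `d = 2` and `-1/t^(d-2)` when `d > 2`. -/
noncomputable def kk (d : ℕ) (t : ℝ) : ℝ := if d = 2 then Real.log t else -1 / t ^ (d - 2)

lemma kk_measurable (d : ℕ) : Measurable (kk d) := by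
  unfold kk
  split
  · exact Real.measurable_log
  · exact measurable_const.div (measurable_id.pow_const _)

lemma key_integral (d : ℕ) (hd : 2 ≤ d) {s r : ℝ} (hs : 0 < s) (hsr : s ≤ r) :
    (∫ t in s..r, ((t : ℝ) ^ (d-1))⁻¹) ≤ kk d r - kk d s := by
  have hr0 : 0 < r := lt_of_lt_of_le hs hsr
  rcases eq_or_lt_of_le hd with h2 | h3
  · subst h2
    simp only [kk, if_pos rfl, pow_one, if_true]
    norm_num
    rw [integral_inv_of_pos hs hr0,
      Real.log_div (ne_of_gt hr0) (ne_of_gt hs)]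
  · have hd3 : 3 ≤ d := h3
    have hne2 : d ≠ 2 := by omega
    have hzpow : ∀ t : ℝ, ((t : ℝ) ^ (d-1))⁻¹ = t ^ (-((d:ℤ) - 1)) := by
      intro t
      have : -((d:ℤ) - 1) = -((d-1 : ℕ) : ℤ) := by omega
      rw [this, zpow_neg, zpow_natCast]
    have h0 : (0 : ℝ) ∉ Set.uIcc s r := by
      rw [Set.uIcc_of_le hsr]; intro hmem; exact absurd hmem.1 (not_le.2 hs)
    rw [integral_congr (fun t _ => hzpow t),
      integral_zpow (Or.inr ⟨by omega, h0⟩)]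
    have hexp : -((d:ℤ) - 1) + 1 = -((d:ℤ) - 2) := by ring
    rw [hexp]
    have hzn : ∀ t : ℝ, 0 < t → t ^ (-((d:ℤ) - 2)) = 1 / t ^ (d - 2) := by
      intro t ht
      have : (d:ℤ) - 2 = ((d-2 : ℕ) : ℤ) := by omega
      rw [this, zpow_neg, zpow_natCast, one_div]
    rw [hzn r hr0, hzn s hs]
    simp only [kk, if_neg hne2]
    have hD : (3:ℝ) ≤ (d:ℝ) := by exact_mod_cast hd3
    have hA : 0 ≤ 1 / s ^ (d-2) - 1 / r ^ (d-2) := by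
      have h1 : 0 < s ^ (d-2) := by positivity
      have h2 : s ^ (d-2) ≤ r ^ (d-2) := pow_le_pow_left₀ (le_of_lt hs) hsr _
      have := one_div_le_one_div_of_le h1 h2
      linarith
    have hcast : ((-((d:ℤ) - 1) : ℤ) : ℝ) + 1 = -((d:ℝ) - 2) := by push_cast; ring
    rw [hcast]
    rw [show (1 / r ^ (d-2) - 1 / s ^ (d-2)) / -((d:ℝ) - 2)
        = (1 / s ^ (d-2) - 1 / r ^ (d-2)) / ((d:ℝ) - 2) by
      rw [div_eq_div_iff (by linarith) (by linarith)]; ring]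
    have := div_le_self hA (by linarith : (1:ℝ) ≤ (d:ℝ) - 2)
    have e1 : (-1:ℝ) / r ^ (d-2) = -(1 / r ^ (d-2)) := by ring
    have e2 : (-1:ℝ) / s ^ (d-2) = -(1 / s ^ (d-2)) := by ring
    linarith

/-- If `h` is a nonnegative increasing (Stieltjes) function on `(0, r]` and the Stieltjes
integral `∫₀^r k_{d-2}(t) dh(t)` converges, then `∫₀^r (h(t) - h(0))/t^(d-1) dt < ∞`,
where `h(0) := lim_{t→0⁺} h(t)`. -/
theorem stmt4 (d : ℕ) (hd : 2 ≤ d) (r : ℝ) (hr : 0 < r) (h : StieltjesFunction ℝ)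
    (hpos : ∀ t ∈ Set.Ioc (0 : ℝ) r, 0 ≤ h t)
    (hint : MeasureTheory.IntegrableOn (kk d) (Set.Ioc (0 : ℝ) r) h.measure) :
    ∃ L : ℝ, Filter.Tendsto (⇑h) (nhdsWithin 0 (Set.Ioi 0)) (nhds L) ∧
      MeasureTheory.IntegrableOn (fun t => (h t - L) / t ^ (d - 1)) (Set.Ioc (0 : ℝ) r) := by
  set μ := h.measure with hμ
  refine ⟨h 0, (h.right_continuous 0).mono_left (nhdsWithin_mono 0 Ioi_subset_Ici_self), ?_⟩
  have hmeas : Measurable fun t : ℝ => (h t - h 0) / t ^ (d - 1) :=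
    (h.mono.measurable.sub measurable_const).div (measurable_id.pow_const _)
  refine ⟨hmeas.aestronglyMeasurable, ?_⟩
  set F : ℝ × ℝ → ℝ≥0∞ := fun p => if p.2 ≤ p.1 then ENNReal.ofReal ((p.1 ^ (d-1))⁻¹) else 0
    with hF
  have hFmeas : Measurable F := by
    apply Measurable.ite (measurableSet_le measurable_snd measurable_fst)
    · exact ((measurable_fst.pow_const _).inv).ennreal_ofReal
    · exact measurable_const
  rw [hasFiniteIntegral_def]
  -- step 1: rewrite integrand as an inner integral against μ
  have step1 : ∫⁻ t in Set.Ioc 0 r, ‖(h t - h 0) / t ^ (d-1)‖ₑ ∂volume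
      = ∫⁻ t in Set.Ioc 0 r, ∫⁻ s in Set.Ioc 0 r, F (t, s) ∂μ ∂volume := by
    apply setLIntegral_congr_fun measurableSet_Ioc
    intro t ht
    have ht0 : 0 < t := ht.1
    have htp : 0 < t ^ (d-1) := by positivity
    have hmono : h 0 ≤ h t := h.mono (le_of_lt ht0)
    have lhs : ‖(h t - h 0) / t ^ (d-1)‖ₑ
        = ENNReal.ofReal (h t - h 0) * ENNReal.ofReal ((t ^ (d-1))⁻¹) := by
      rw [← ENNReal.ofReal_mul (by linarith), ← div_eq_mul_inv,
        Real.enorm_eq_ofReal (div_nonneg (by linarith) (le_of_lt htp))]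
    beta_reduce
    rw [lhs]
    have hFs : ∀ s : ℝ, F (t, s) = Set.indicator (Set.Iic t)
        (fun _ => ENNReal.ofReal ((t ^ (d-1))⁻¹)) s := by
      intro s; simp [hF, Set.indicator_apply, Set.mem_Iic]
    simp only [hFs]
    rw [lintegral_indicator measurableSet_Iic, setLIntegral_const,
      Measure.restrict_apply measurableSet_Iic]
    have hset : Set.Iic t ∩ Set.Ioc 0 r = Set.Ioc 0 t := by
      ext x
      simp only [Set.mem_inter_iff, Set.mem_Iic, Set.mem_Ioc]
      constructor
      · rintro ⟨h1, h2, h3⟩; exact ⟨h2, h1⟩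
      · rintro ⟨h1, h2⟩; exact ⟨h2, h1, le_trans h2 ht.2⟩
    rw [hset, hμ, h.measure_Ioc, mul_comm]
  rw [step1, lintegral_lintegral_swap hFmeas.aemeasurable]
  -- step 2: bound the inner integral by the kernel
  have step2 : ∀ s ∈ Set.Ioc (0:ℝ) r,
      (∫⁻ t in Set.Ioc 0 r, F (t, s) ∂volume) ≤ ENNReal.ofReal (kk d r - kk d s) := by
    intro s hs
    have hs0 : 0 < s := hs.1
    have hsr : s ≤ r := hs.2
    have hFs : ∀ t : ℝ, F (t, s) = Set.indicator (Set.Ici s)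
        (fun t => ENNReal.ofReal ((t ^ (d-1))⁻¹)) t := by
      intro t; simp [hF, Set.indicator_apply, Set.mem_Ici]
    simp only [hFs]
    rw [lintegral_indicator measurableSet_Ici,
      Measure.restrict_restrict measurableSet_Ici]
    have hset : Set.Ici s ∩ Set.Ioc 0 r = Set.Icc s r := by
      ext x
      simp only [Set.mem_inter_iff, Set.mem_Ici, Set.mem_Ioc, Set.mem_Icc]
      constructor
      · rintro ⟨h1, h2, h3⟩; exact ⟨h1, h3⟩
      · rintro ⟨h1, h2⟩; exact ⟨h1, lt_of_lt_of_le hs0 h1, h2⟩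
    rw [hset]
    have hcont : ContinuousOn (fun t : ℝ => ((t : ℝ) ^ (d-1))⁻¹) (Set.Icc s r) :=
      (continuous_pow (d-1)).continuousOn.inv₀
        (fun x hx => pow_ne_zero _ (ne_of_gt (lt_of_lt_of_le hs0 hx.1)))
    have hInt : MeasureTheory.IntegrableOn (fun t : ℝ => ((t : ℝ) ^ (d-1))⁻¹)
        (Set.Icc s r) volume := hcont.integrableOn_compact isCompact_Icc
    have hnn : 0 ≤ᵐ[volume.restrict (Set.Icc s r)] fun t : ℝ => ((t : ℝ) ^ (d-1))⁻¹ := by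
      refine (ae_restrict_iff' measurableSet_Icc).2 (ae_of_all _ fun t htt => ?_)
      exact inv_nonneg.2 (pow_nonneg (le_of_lt (lt_of_lt_of_le hs0 htt.1)) _)
    rw [← MeasureTheory.ofReal_integral_eq_lintegral_ofReal hInt hnn]
    apply ENNReal.ofReal_le_ofReal
    rw [MeasureTheory.integral_Icc_eq_integral_Ioc,
      ← integral_of_le hsr]
    exact key_integral d hd hs0 hsr
  -- step 3: conclude finiteness
  have hμfin : μ (Set.Ioc (0:ℝ) r) < ∞ := by
    rw [hμ, h.measure_Ioc]; exact ENNReal.ofReal_lt_top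
  calc ∫⁻ s in Set.Ioc 0 r, ∫⁻ t in Set.Ioc 0 r, F (t, s) ∂volume ∂μ
      ≤ ∫⁻ s in Set.Ioc 0 r, ENNReal.ofReal (kk d r - kk d s) ∂μ :=
        setLIntegral_mono (measurable_const.sub (kk_measurable d)).ennreal_ofReal step2
    _ ≤ ∫⁻ s in Set.Ioc 0 r, (‖kk d r‖ₑ + ‖kk d s‖ₑ) ∂μ := by
        refine setLIntegral_mono (measurable_const.add (kk_measurable d).enorm)
          (fun s _ => ?_)
        calc ENNReal.ofReal (kk d r - kk d s)
            ≤ ENNReal.ofReal |kk d r - kk d s| :=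
              ENNReal.ofReal_le_ofReal (le_abs_self _)
          _ = ‖kk d r - kk d s‖ₑ := (Real.enorm_eq_ofReal_abs _).symm
          _ ≤ ‖kk d r‖ₑ + ‖kk d s‖ₑ := by
              exact enorm_sub_le
    _ = ‖kk d r‖ₑ * μ (Set.Ioc 0 r) + ∫⁻ s in Set.Ioc 0 r, ‖kk d s‖ₑ ∂μ := by
        rw [lintegral_add_left measurable_const, setLIntegral_const]
    _ < ∞ := by
        apply ENNReal.add_lt_top.2
        constructor
        · exact ENNReal.mul_lt_top enorm_lt_top hμfin
        · exact hint.2
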